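/- For a monoid H, the restricted finitary power monoid P_{fin,×}(H) is a divisor-closed submonoid of the finitary power monoid P_fin(H) if and only if H is Dedekind-finite. -/
import Mathlib


open scoped Pointwise

/-- Two-sided divisibility in a monoid: `x` divides `y` if `y = u * x * v` for some `u, v`. -/
def DvdTS {M : Type*} [Monoid M] (x y : M) : Prop := ∃ u v : M, y = u * x * v

/-- A unit-divisor is a divisor of the identity. -/
def IsUnitDivisor {M : Type*} [Monoid M] (x : M) : Prop := DvdTS x 1

/-- `x` is a proper divisor of `y` if `x` divides `y` but `y` does not divide `x`. -/
def IsProperDivisorTS {M : Type*} [Monoid M] (x y : M) : Prop := DvdTS x y ∧ ¬ DvdTS y x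

/-- An atom is a non-unit that is not a product of two non-units. -/
def IsAtomTS {M : Type*} [Monoid M] (a : M) : Prop :=
  ¬ IsUnit a ∧ ∀ b c : M, a = b * c → IsUnit b ∨ IsUnit c

/-- A quark is a non-unit-divisor all of whose proper divisors are unit-divisors. -/
def IsQuarkTS {M : Type*} [Monoid M] (a : M) : Prop :=
  ¬ IsUnitDivisor a ∧ ∀ b : M, IsProperDivisorTS b a → IsUnitDivisor b

/-- An irreducible is a non-unit-divisor with no factorization `a = b * c` into proper
divisors that are not unit-divisors. -/
def IsIrredTS {M : Type*} [Monoid M] (a : M) : Prop :=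
  ¬ IsUnitDivisor a ∧
    ¬ ∃ b c : M, a = b * c ∧ IsProperDivisorTS b a ∧ IsProperDivisorTS c a ∧
      ¬ IsUnitDivisor b ∧ ¬ IsUnitDivisor c

def DedekindFiniteM (M : Type*) [Monoid M] : Prop := ∀ x y : M, x * y = 1 → y * x = 1

/-- ACC on principal two-sided ideals: no infinite sequence of consecutive proper divisors. -/
def ACCPrincipalTS (M : Type*) [Monoid M] : Prop :=
  ¬ ∃ f : ℕ → M, ∀ n : ℕ, IsProperDivisorTS (f (n + 1)) (f n)

/-- Factorable: every non-unit-divisor is a (non-empty) product of irreducibles. -/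
def FactorableM (M : Type*) [Monoid M] : Prop :=
  ∀ x : M, ¬ IsUnitDivisor x →
    ∃ l : List M, l ≠ [] ∧ (∀ a ∈ l, IsIrredTS a) ∧ l.prod = x

/-- Atomic: every non-unit-divisor is a (non-empty) product of atoms. -/
def AtomicM (M : Type*) [Monoid M] : Prop :=
  ∀ x : M, ¬ IsUnitDivisor x →
    ∃ l : List M, l ≠ [] ∧ (∀ a ∈ l, IsAtomTS a) ∧ l.prod = x

/-- The finitary power monoid: non-empty finite subsets of `H` under setwise multiplication. -/
def PfinM (H : Type*) [Monoid H] : Submonoid (Set H) where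
  carrier := {X : Set H | X.Finite ∧ X.Nonempty}
  mul_mem' := fun hX hY => ⟨hX.1.mul hY.1, hX.2.mul hY.2⟩
  one_mem' := ⟨Set.finite_one, 1, Set.mem_one.mpr rfl⟩

/-- The restricted finitary power monoid: non-empty finite subsets of `H` containing a unit. -/
def PfinTimes (H : Type*) [Monoid H] : Submonoid (Set H) where
  carrier := {X : Set H | X.Finite ∧ ∃ u ∈ X, IsUnit u}
  mul_mem' := by
    rintro X Y ⟨hXf, u, hu, hu'⟩ ⟨hYf, v, hv, hv'⟩
    exact ⟨hXf.mul hYf, u * v, Set.mul_mem_mul hu hv, hu'.mul hv'⟩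
  one_mem' := ⟨Set.finite_one, 1, Set.mem_one.mpr rfl, isUnit_one⟩

/-- The reduced finitary power monoid: finite subsets of `H` containing `1`. -/
def PfinOne (H : Type*) [Monoid H] : Submonoid (Set H) where
  carrier := {X : Set H | X.Finite ∧ (1 : H) ∈ X}
  mul_mem' := by
    rintro X Y ⟨hXf, hX1⟩ ⟨hYf, hY1⟩
    exact ⟨hXf.mul hYf, by simpa using Set.mul_mem_mul hX1 hY1⟩
  one_mem' := ⟨Set.finite_one, Set.mem_one.mpr rfl⟩

lemma mem_PfinM {H : Type*} [Monoid H] {X : Set H} :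
    X ∈ PfinM H ↔ X.Finite ∧ X.Nonempty := Iff.rfl

lemma mem_PfinTimes {H : Type*} [Monoid H] {X : Set H} :
    X ∈ PfinTimes H ↔ X.Finite ∧ ∃ u ∈ X, IsUnit u := Iff.rfl

lemma mem_PfinOne {H : Type*} [Monoid H] {X : Set H} :
    X ∈ PfinOne H ↔ X.Finite ∧ (1 : H) ∈ X := Iff.rfl

/-- Acyclic: `u * x * v ≠ x` whenever `u` or `v` is a non-unit. -/
def AcyclicM (M : Type*) [Monoid M] : Prop :=
  ∀ u v x : M, (¬ IsUnit u ∨ ¬ IsUnit v) → u * x * v ≠ x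

/-- Unit-cancellative: `x * y ≠ x ≠ y * x` whenever `y` is a non-unit. -/
def UnitCancellativeM (M : Type*) [Monoid M] : Prop :=
  ∀ x y : M, ¬ IsUnit y → x * y ≠ x ∧ y * x ≠ x

/-- Strongly unit-cancellative: `x * y ≠ x ≠ y * x` whenever `y ≠ 1`. -/
def StrongUnitCancellativeM (M : Type*) [Monoid M] : Prop :=
  ∀ x y : M, y ≠ 1 → x * y ≠ x ∧ y * x ≠ x

/-- Torsion-free: the identity is the only element with finitely many powers. -/
def TorsionFreeM (M : Type*) [Monoid M] : Prop :=
  ∀ x : M, (Set.range fun k : ℕ => x ^ k).Finite → x = 1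

/-- Cancellative monoid. -/
def CancellativeM (M : Type*) [Monoid M] : Prop :=
  ∀ a x y : M, (a * x = a * y → x = y) ∧ (x * a = y * a → x = y)

/-- The set of lengths of (irreducible) factorizations of `x`, with the conventions
`L(1) = {0}` and `L(u) = ∅` for a unit-divisor `u ≠ 1`. -/
def LengthSet {M : Type*} [Monoid M] (x : M) : Set ℕ :=
  {n | (x = 1 ∧ n = 0) ∨
    (¬ IsUnitDivisor x ∧
      ∃ l : List M, l.length = n ∧ l ≠ [] ∧ (∀ a ∈ l, IsIrredTS a) ∧ l.prod = x)}

/-- The system of lengths: the family of non-empty length sets. -/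
def SystemOfLengths (M : Type*) [Monoid M] : Set (Set ℕ) :=
  {L | L.Nonempty ∧ ∃ x : M, LengthSet x = L}

/-- `P_{fin,×}(H)` is divisor-closed in `P_fin(H)` iff `H` is Dedekind-finite. -/

lemma df_unit_of_mul {H : Type*} [Monoid H] (hdf : DedekindFiniteM H) {a b : H}
    (h : IsUnit (a * b)) : IsUnit a ∧ IsUnit b := by
  obtain ⟨w, hw1, hw2⟩ : ∃ w, a * b * w = 1 ∧ w * (a * b) = 1 := by
    obtain ⟨u, hu⟩ := h
    exact ⟨↑u⁻¹, by rw [← hu]; simp, by rw [← hu]; simp⟩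
  have ha1 : a * (b * w) = 1 := by rw [← mul_assoc]; exact hw1
  have hb1 : (w * a) * b = 1 := by rw [mul_assoc]; exact hw2
  exact ⟨⟨⟨a, b * w, ha1, hdf _ _ ha1⟩, rfl⟩, ⟨⟨b, w * a, hdf _ _ hb1, hb1⟩, rfl⟩⟩

theorem pfinTimes_divisor_closed_iff_dedekind_finite (H : Type*) [Monoid H] :
    (∀ X Y : PfinM H, (X : Set H) ∈ PfinTimes H → DvdTS Y X → (Y : Set H) ∈ PfinTimes H)
      ↔ DedekindFiniteM H := by
  constructor
  · intro hdc x y hxy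
    set X : PfinM H := ⟨{(1:H)}, Set.finite_singleton _, ⟨1, rfl⟩⟩
    set Y : PfinM H := ⟨{y}, Set.finite_singleton _, ⟨y, rfl⟩⟩
    set U : PfinM H := ⟨{x}, Set.finite_singleton _, ⟨x, rfl⟩⟩
    have hX : (X : Set H) ∈ PfinTimes H :=
      ⟨Set.finite_singleton _, 1, rfl, isUnit_one⟩
    have hdvd : DvdTS Y X := by
      refine ⟨U, 1, ?_⟩
      apply Subtype.ext
      show ({(1:H)} : Set H) = ({x} : Set H) * {y} * 1
      rw [mul_one, Set.singleton_mul_singleton, hxy]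
    obtain ⟨-, u, hu, huu⟩ := hdc X Y hX hdvd
    rw [Set.mem_singleton_iff] at hu
    subst hu
    obtain ⟨v, hv⟩ := huu
    have : x = ↑v⁻¹ := by
      calc x = x * (↑v * ↑v⁻¹) := by simp
        _ = ↑v⁻¹ := by rw [← mul_assoc, hv, hxy, one_mul]
    rw [this, ← hv]
    simp
  · rintro hdf X Y ⟨hXf, u, hu, huu⟩ ⟨U, V, hEq⟩
    refine ⟨Y.2.1, ?_⟩
    have : u ∈ (U : Set H) * Y * V := by
      rw [← Submonoid.coe_mul, ← Submonoid.coe_mul, ← hEq]; exact hu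
    obtain ⟨ab, ⟨a, ha, b, hb, rfl⟩, c, hc, rfl⟩ := this
    have h1 := df_unit_of_mul hdf huu
    have h2 := df_unit_of_mul hdf h1.1
    exact ⟨b, hb, h2.2⟩
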